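/- Let φ(t) = (t−1)²(t+α)/t and ψ(t) = (t−1)⁴(t+β)/t² with α ≠ −1, β ≠ −1. If the singular point at t = 1 has Milnor number ≥ 8 (i.e. the curve τ ↦ (φ(1+τ), ψ(1+τ)) has an A₈ singularity at τ = 0), then α = 2 and β = 1/2. -/

import Mathlib

open Filter Topology

private lemma dslope_analyticAt {f : ℂ → ℂ} (hf : AnalyticAt ℂ f 0) :
    AnalyticAt ℂ (dslope f 0) 0 := by
  obtain ⟨p, hp⟩ := hf
  exact ⟨p.fslope, hp.has_fpower_series_dslope_fslope⟩

private lemma dslope_expand (f : ℂ → ℂ) (x : ℂ) :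
    f x = f 0 + x * dslope f 0 x := by
  have h := sub_smul_dslope f 0 x
  rw [sub_zero, smul_eq_mul] at h
  linear_combination -h

private lemma limit_aux {A B : ℂ → ℂ} (hA : ContinuousAt A 0) (hB : ContinuousAt B 0)
    (h : ∀ᶠ τ in 𝓝[≠] (0 : ℂ), A τ = B τ) : A 0 = B 0 := by
  have h1 : Filter.Tendsto A (𝓝[≠] (0 : ℂ)) (𝓝 (A 0)) := hA.continuousWithinAt
  have h2 : Filter.Tendsto B (𝓝[≠] (0 : ℂ)) (𝓝 (B 0)) := hB.continuousWithinAt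
  exact tendsto_nhds_unique (h1.congr' h) h2

/-- For `φ(t) = (t−1)²(t+α)/t` and `ψ(t) = (t−1)⁴(t+β)/t²` with
`α, β ≠ −1`: if the singularity of `τ ↦ (φ(1+τ), ψ(1+τ))` at `τ = 0` has Milnor
number ≥ 8 (A₈ singularity), i.e. after subtracting a suitable analytic function of
`x = φ(1+τ)` from `y = ψ(1+τ)` the remainder vanishes to order ≥ 9 in `τ`, then
`α = 2` and `β = 1/2`. -/
theorem A8_singularity_forces_case_u (α β : ℂ) (hα : α ≠ -1) (hβ : β ≠ -1)
    (φ ψ : ℂ → ℂ)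
    (hφ : ∀ t : ℂ, φ t = (t - 1) ^ 2 * (t + α) / t)
    (hψ : ∀ t : ℂ, ψ t = (t - 1) ^ 4 * (t + β) / t ^ 2)
    (hA8 : ∃ g h : ℂ → ℂ, AnalyticAt ℂ g 0 ∧ AnalyticAt ℂ h 0 ∧
      ∀ᶠ τ in nhds (0 : ℂ), ψ (1 + τ) - g (φ (1 + τ)) = τ ^ 9 * h τ) :
    α = 2 ∧ β = 1 / 2 := by
  obtain ⟨g, h, hg, hh, heq⟩ := hA8
  have ha : (α + 1) ≠ 0 := fun h' => hα (by linear_combination h')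
  have hb : (β + 1) ≠ 0 := fun h' => hβ (by linear_combination h')
  set W : ℂ → ℂ := fun τ => τ ^ 2 * (α + 1 + τ) / (1 + τ) with hWdef
  have hW0 : W 0 = 0 := by simp [hWdef]
  have hWc : ContinuousAt W 0 := by
    apply ContinuousAt.div (by fun_prop) (by fun_prop) (by norm_num)
  set g1 : ℂ → ℂ := dslope g 0 with hg1def
  set g2 : ℂ → ℂ := dslope g1 0 with hg2def
  set g3 : ℂ → ℂ := dslope g2 0 with hg3def
  set g4 : ℂ → ℂ := dslope g3 0 with hg4def
  have hg1 : AnalyticAt ℂ g1 0 := dslope_analyticAt hg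
  have hg2 : AnalyticAt ℂ g2 0 := dslope_analyticAt hg1
  have hg3 : AnalyticAt ℂ g3 0 := dslope_analyticAt hg2
  have hg4 : AnalyticAt ℂ g4 0 := dslope_analyticAt hg3
  have fac0 : ∀ x : ℂ, g x = g 0 + x * g1 x := fun x => dslope_expand g x
  have fac1 : ∀ x : ℂ, g1 x = g1 0 + x * g2 x := fun x => dslope_expand g1 x
  have fac2 : ∀ x : ℂ, g2 x = g2 0 + x * g3 x := fun x => dslope_expand g2 x
  have fac3 : ∀ x : ℂ, g3 x = g3 0 + x * g4 x := fun x => dslope_expand g3 x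
  have hcomp : ∀ f : ℂ → ℂ, AnalyticAt ℂ f 0 → ContinuousAt (fun τ => f (W τ)) 0 := by
    intro f hf
    have h1 : ContinuousAt f (W 0) := by rw [hW0]; exact hf.continuousAt
    exact h1.comp hWc
  have hcc1 := hcomp g1 hg1
  have hcc2 := hcomp g2 hg2
  have hcc3 := hcomp g3 hg3
  have hcc4 := hcomp g4 hg4
  have hhc : ContinuousAt h 0 := hh.continuousAt
  have hs1 : ∀ᶠ τ in 𝓝 (0 : ℂ), 1 + τ ≠ 0 := by
    have ht : Filter.Tendsto (fun τ : ℂ => 1 + τ) (𝓝 0) (𝓝 1) := by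
      simpa using ((by fun_prop : Continuous fun τ : ℂ => 1 + τ).tendsto (0 : ℂ))
    exact ht.eventually_ne one_ne_zero
  have htne : ∀ᶠ τ in 𝓝[≠] (0 : ℂ), τ ≠ 0 := by
    exact eventually_mem_nhdsWithin
  have hs1L : ∀ᶠ τ in 𝓝[≠] (0 : ℂ), 1 + τ ≠ 0 := hs1.filter_mono nhdsWithin_le_nhds
  have hWs : ∀ τ : ℂ, 1 + τ ≠ 0 → (1 + τ) * W τ = τ ^ 2 * (α + 1 + τ) := by
    intro τ hs
    simp only [hWdef]
    field_simp
  have hg0 : g 0 = 0 := by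
    have h00 := heq.self_of_nhds
    rw [hφ, hψ] at h00
    norm_num at h00
    exact h00
  -- cleared-denominator form of the main equation
  have key0 : ∀ᶠ τ in 𝓝 (0 : ℂ),
      τ ^ 4 * (β + 1 + τ) - (1 + τ) ^ 2 * (W τ * g1 (W τ)) = τ ^ 9 * (1 + τ) ^ 2 * h τ := by
    filter_upwards [heq, hs1] with τ hk hs
    rw [hψ, hφ] at hk
    have hArg : (1 + τ - 1) ^ 2 * (1 + τ + α) / (1 + τ) = W τ := by
      simp only [hWdef]; ring
    rw [hArg, fac0 (W τ), hg0, zero_add] at hk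
    have hinv2 : ((1 + τ) ^ 2)⁻¹ * (1 + τ) ^ 2 = 1 := inv_mul_cancel₀ (pow_ne_zero 2 hs)
    linear_combination (1 + τ) ^ 2 * hk - τ ^ 4 * (1 + τ + β) * hinv2
  have keyA1 : ∀ᶠ τ in 𝓝[≠] (0 : ℂ),
      τ ^ 2 * (β + 1 + τ) - (α + 1 + τ) * (1 + τ) * g1 (W τ)
        = τ ^ 7 * (1 + τ) ^ 2 * h τ := by
    filter_upwards [key0.filter_mono nhdsWithin_le_nhds, hs1L, htne] with τ hk hs ht
    have hw := hWs τ hs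
    refine mul_left_cancel₀ (pow_ne_zero 2 ht) ?_
    linear_combination hk + (1 + τ) * g1 (W τ) * hw
  have hg1_0 : g1 0 = 0 := by
    have hl := limit_aux
      (A := fun τ : ℂ => τ ^ 2 * (β + 1 + τ) - (α + 1 + τ) * (1 + τ) * g1 (W τ))
      (B := fun τ : ℂ => τ ^ 7 * (1 + τ) ^ 2 * h τ)
      (by exact ContinuousAt.sub (by fun_prop) (ContinuousAt.mul (by fun_prop) hcc1))
      (by fun_prop) keyA1
    norm_num [hW0] at hl
    rcases hl with hl | hl
    · exact absurd (by linear_combination hl) hα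
    · exact hl
  have keyA2 : ∀ᶠ τ in 𝓝[≠] (0 : ℂ),
      (β + 1 + τ) - (α + 1 + τ) ^ 2 * g2 (W τ) = τ ^ 5 * (1 + τ) ^ 2 * h τ := by
    filter_upwards [keyA1, hs1L, htne] with τ hk hs ht
    rw [fac1 (W τ), hg1_0, zero_add] at hk
    have hw := hWs τ hs
    refine mul_left_cancel₀ (pow_ne_zero 2 ht) ?_
    linear_combination hk + (α + 1 + τ) * g2 (W τ) * hw
  have hE0 : (β + 1) - (α + 1) ^ 2 * g2 0 = 0 := by
    have hl := limit_aux
      (A := fun τ : ℂ => (β + 1 + τ) - (α + 1 + τ) ^ 2 * g2 (W τ))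
      (B := fun τ : ℂ => τ ^ 5 * (1 + τ) ^ 2 * h τ)
      (by exact ContinuousAt.sub (by fun_prop) (ContinuousAt.mul (by fun_prop) hcc2))
      (by fun_prop) keyA2
    norm_num [hW0] at hl
    linear_combination hl
  have keyA4 : ∀ᶠ τ in 𝓝[≠] (0 : ℂ),
      ((1 + (β + 1)) - g2 0 * (2 * (α + 1) + (α + 1) ^ 2))
        + (1 - g2 0 * (1 + 2 * (α + 1))) * τ - g2 0 * τ ^ 2
        - τ * (α + 1 + τ) ^ 3 * g3 (W τ) = τ ^ 4 * (1 + τ) ^ 3 * h τ := by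
    filter_upwards [keyA2, hs1L, htne] with τ hk hs ht
    rw [fac2 (W τ)] at hk
    have hw := hWs τ hs
    refine mul_left_cancel₀ ht ?_
    linear_combination (1 + τ) * hk + (α + 1 + τ) ^ 2 * g3 (W τ) * hw - hE0
  have hE1 : (1 + (β + 1)) - g2 0 * (2 * (α + 1) + (α + 1) ^ 2) = 0 := by
    have hl := limit_aux
      (A := fun τ : ℂ => ((1 + (β + 1)) - g2 0 * (2 * (α + 1) + (α + 1) ^ 2))
        + (1 - g2 0 * (1 + 2 * (α + 1))) * τ - g2 0 * τ ^ 2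
        - τ * (α + 1 + τ) ^ 3 * g3 (W τ))
      (B := fun τ : ℂ => τ ^ 4 * (1 + τ) ^ 3 * h τ)
      (by exact ContinuousAt.sub (by fun_prop) (ContinuousAt.mul (by fun_prop) hcc3))
      (by fun_prop) keyA4
    norm_num [hW0] at hl
    linear_combination hl
  have keyA5 : ∀ᶠ τ in 𝓝[≠] (0 : ℂ),
      (1 - g2 0 * (1 + 2 * (α + 1))) - g2 0 * τ - (α + 1 + τ) ^ 3 * g3 (W τ)
        = τ ^ 3 * (1 + τ) ^ 3 * h τ := by
    filter_upwards [keyA4, htne] with τ hk ht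
    refine mul_left_cancel₀ ht ?_
    linear_combination hk - hE1
  have hE2 : (1 - g2 0 * (1 + 2 * (α + 1))) - (α + 1) ^ 3 * g3 0 = 0 := by
    have hl := limit_aux
      (A := fun τ : ℂ => (1 - g2 0 * (1 + 2 * (α + 1))) - g2 0 * τ
        - (α + 1 + τ) ^ 3 * g3 (W τ))
      (B := fun τ : ℂ => τ ^ 3 * (1 + τ) ^ 3 * h τ)
      (by exact ContinuousAt.sub (by fun_prop) (ContinuousAt.mul (by fun_prop) hcc3))
      (by fun_prop) keyA5
    norm_num [hW0] at hl
    linear_combination hl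
  have keyA7 : ∀ᶠ τ in 𝓝[≠] (0 : ℂ),
      (1 - 2 * g2 0 - 2 * (α + 1) * g2 0 - 3 * (α + 1) ^ 2 * g3 0 - (α + 1) ^ 3 * g3 0)
        + (-(g2 0) - 3 * (α + 1) * g3 0 - 3 * (α + 1) ^ 2 * g3 0) * τ
        + (-(g3 0) - 3 * (α + 1) * g3 0) * τ ^ 2 - g3 0 * τ ^ 3
        - τ * (α + 1 + τ) ^ 4 * g4 (W τ) = τ ^ 2 * (1 + τ) ^ 4 * h τ := by
    filter_upwards [keyA5, hs1L, htne] with τ hk hs ht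
    rw [fac3 (W τ)] at hk
    have hw := hWs τ hs
    refine mul_left_cancel₀ ht ?_
    linear_combination (1 + τ) * hk + (α + 1 + τ) ^ 3 * g4 (W τ) * hw - hE2
  have hE3 : 1 - 2 * g2 0 - 2 * (α + 1) * g2 0 - 3 * (α + 1) ^ 2 * g3 0
      - (α + 1) ^ 3 * g3 0 = 0 := by
    have hl := limit_aux
      (A := fun τ : ℂ =>
        (1 - 2 * g2 0 - 2 * (α + 1) * g2 0 - 3 * (α + 1) ^ 2 * g3 0 - (α + 1) ^ 3 * g3 0)
        + (-(g2 0) - 3 * (α + 1) * g3 0 - 3 * (α + 1) ^ 2 * g3 0) * τ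
        + (-(g3 0) - 3 * (α + 1) * g3 0) * τ ^ 2 - g3 0 * τ ^ 3
        - τ * (α + 1 + τ) ^ 4 * g4 (W τ))
      (B := fun τ : ℂ => τ ^ 2 * (1 + τ) ^ 4 * h τ)
      (by exact ContinuousAt.sub (by fun_prop) (ContinuousAt.mul (by fun_prop) hcc4))
      (by fun_prop) keyA7
    norm_num [hW0] at hl
    linear_combination hl
  -- solve the system
  have hα2 : α = 2 := by
    linear_combination (-2 * (α + 1) ^ 2) * hE3 + (2 * (α + 1) * (3 + (α + 1))) * hE2
      - (3 + 5 * (α + 1)) * hE1 + (3 + 5 * (α + 1)) * hE0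
  subst hα2
  refine ⟨rfl, ?_⟩
  have hc2 : 1 - 2 * ((2 : ℂ) + 1) * g2 0 = 0 := by linear_combination hE1 - hE0
  linear_combination hE0 - (3 / 2 : ℂ) * hc2
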